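/- arXiv:2510.06923 — 2 statements merged into one kernel-verified Lean document; each statement's English description precedes it below -/
import Mathlib

section
/- Gentle Measurement Lemma: Let ρ be a density matrix on ℂ^n (a positive semidefinite complex n×n matrix with trace 1), let Π be an orthogonal projection (a complex n×n matrix with Π† = Π and Π² = Π), and let ε ∈ [0,1]. If Tr(Πρ) ≥ 1 − ε and Tr(Πρ) > 0, then the trace distance between ρ and the post-measurement state ΠρΠ/Tr(Πρ) is at most √ε, i.e. (1/2)·Tr(√((ρ − σ)†(ρ − σ))) ≤ √ε where σ = ΠρΠ/Tr(Πρ). -/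
open Matrix
open scoped ComplexOrder

noncomputable def Matrix.PosSemidef.sqrt {n 𝕜 : Type*} [Fintype n] [DecidableEq n] [RCLike 𝕜]
    {A : Matrix n n 𝕜} (hA : A.PosSemidef) : Matrix n n 𝕜 :=
  hA.1.eigenvectorUnitary.1 * diagonal ((↑) ∘ (√·) ∘ hA.1.eigenvalues) *
    (star hA.1.eigenvectorUnitary : Matrix n n 𝕜)

section
open scoped MatrixOrder

lemma Matrix.PosSemidef.sqrt_eq_cfc {n : ℕ} {A : Matrix (Fin n) (Fin n) ℂ} (hA : A.PosSemidef) :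
    hA.sqrt = CFC.sqrt A := by
  rw [CFC.sqrt_eq_real_sqrt A hA.nonneg, cfcₙ_eq_cfc, hA.1.cfc_eq, Matrix.IsHermitian.cfc,
    Unitary.conjStarAlgAut_apply]
  rfl

lemma Matrix.PosSemidef.posSemidef_sqrt {n : ℕ} {A : Matrix (Fin n) (Fin n) ℂ}
    (hA : A.PosSemidef) : hA.sqrt.PosSemidef := by
  rw [hA.sqrt_eq_cfc]
  exact (CFC.sqrt_nonneg A).posSemidef

lemma Matrix.PosSemidef.sqrt_mul_self {n : ℕ} {A : Matrix (Fin n) (Fin n) ℂ}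
    (hA : A.PosSemidef) : hA.sqrt * hA.sqrt = A := by
  rw [hA.sqrt_eq_cfc]
  exact CFC.sqrt_mul_sqrt_self A hA.nonneg

lemma Matrix.PosSemidef.eq_sqrt_of_sq_eq {n : ℕ} {A B : Matrix (Fin n) (Fin n) ℂ}
    (hA : A.PosSemidef) (hB : B.PosSemidef) (hAB : A ^ 2 = B) : A = hB.sqrt := by
  rw [hB.sqrt_eq_cfc]
  exact (CFC.sqrt_unique (by rw [← pow_two]; exact hAB) hA.nonneg).symm

end

lemma aux_trace_re_nonneg {n : ℕ} {M : Matrix (Fin n) (Fin n) ℂ} (hM : M.PosSemidef) :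
    0 ≤ M.trace.re := by
  rw [Matrix.trace, Complex.re_sum]
  apply Finset.sum_nonneg
  intro i _
  have h := hM.dotProduct_mulVec_nonneg (Pi.single i 1)
  have heq : star (Pi.single i 1) ⬝ᵥ (M *ᵥ Pi.single i 1) = M i i := by
    simp [Matrix.mulVec_single, dotProduct, Pi.single_apply]
  rw [heq] at h
  exact (Complex.nonneg_iff.mp h).1

lemma aux_trace_real {n : ℕ} {M : Matrix (Fin n) (Fin n) ℂ} (hM : M.IsHermitian) :
    M.trace = (M.trace.re : ℂ) := by
  have h := Matrix.trace_conjTranspose M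
  rw [hM.eq] at h
  exact (Complex.conj_eq_iff_re.mp h.symm).symm

lemma aux_cs {n : ℕ} (X Y : Matrix (Fin n) (Fin n) ℂ) :
    ((Xᴴ * Y).trace).re ≤
      Real.sqrt ((Xᴴ * X).trace).re * Real.sqrt ((Yᴴ * Y).trace).re := by
  classical
  let f : Matrix (Fin n) (Fin n) ℂ → EuclideanSpace ℂ (Fin n × Fin n) :=
    fun M => WithLp.toLp 2 (fun q : Fin n × Fin n => M q.2 q.1)
  have key : ∀ M N : Matrix (Fin n) (Fin n) ℂ,
      (Mᴴ * N).trace = inner ℂ (f M) (f N) := by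
    intro M N
    rw [Matrix.trace]
    simp only [Matrix.diag, Matrix.mul_apply, Matrix.conjTranspose_apply]
    rw [PiLp.inner_apply]
    rw [← Finset.sum_product']
    simp only [RCLike.inner_apply]
    apply Finset.sum_congr
    · ext q; simp
    · intro q _; exact mul_comm _ _
  have hx : Real.sqrt ((Xᴴ * X).trace).re = ‖f X‖ := by
    rw [key, @norm_eq_sqrt_re_inner ℂ]; rfl
  have hy : Real.sqrt ((Yᴴ * Y).trace).re = ‖f Y‖ := by
    rw [key, @norm_eq_sqrt_re_inner ℂ]; rfl
  rw [key, hx, hy]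
  calc (inner ℂ (f X) (f Y) : ℂ).re ≤ ‖(inner ℂ (f X) (f Y) : ℂ)‖ := Complex.re_le_norm _
    _ ≤ ‖f X‖ * ‖f Y‖ := norm_inner_le_norm _ _

/-- Gentle Measurement Lemma: if a projective measurement `P` accepts the density matrix `ρ`
with probability at least `1 - ε`, then the post-measurement state `P ρ P / Tr(P ρ)` is within
trace distance `√ε` of `ρ`. -/
theorem gentle_measurement {n : ℕ} (ρ P : Matrix (Fin n) (Fin n) ℂ)
    (hρ : ρ.PosSemidef) (hρtr : ρ.trace = 1)
    (hP : Pᴴ = P) (hP2 : P * P = P)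
    (ε : ℝ) (hε0 : 0 ≤ ε) (hε1 : ε ≤ 1)
    (hacc : 1 - ε ≤ ((P * ρ).trace).re) (hpos : 0 < ((P * ρ).trace).re)
    (σ : Matrix (Fin n) (Fin n) ℂ)
    (hσ : σ = ((P * ρ).trace)⁻¹ • (P * ρ * P)) :
    (1 / 2) * ((Matrix.posSemidef_conjTranspose_mul_self (ρ - σ)).sqrt.trace).re
      ≤ Real.sqrt ε := by
  classical
  set p : ℝ := ((P * ρ).trace).re with hpdef
  -- basic facts about p
  have hPρP_psd : (P * ρ * P).PosSemidef := by
    have := hρ.mul_mul_conjTranspose_same P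
    rwa [hP] at this
  have htr_cyc : (P * ρ * P).trace = (P * ρ).trace := by
    rw [Matrix.trace_mul_cycle, hP2]
  have hpt : (P * ρ).trace = (p : ℂ) := by
    have h := aux_trace_real hPρP_psd.1
    rw [htr_cyc] at h
    exact h
  have hp_pos : 0 < p := hpos
  have hp_le_one : p ≤ 1 := by
    have hQ2 : (1 - P) * (1 - P) = 1 - P := by
      simp [mul_sub, sub_mul, hP2]
    have hQH : (1 - P)ᴴ = 1 - P := by
      rw [conjTranspose_sub, hP, conjTranspose_one]
    have hQpsd : ((1 - P) * ρ * (1 - P)).PosSemidef := by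
      have := hρ.mul_mul_conjTranspose_same (1 - P)
      rwa [hQH] at this
    have h1 : ((1 - P) * ρ * (1 - P)).trace = ((1 - P) * ρ).trace := by
      rw [Matrix.trace_mul_cycle, hQ2]
    have h2 : ((1 - P) * ρ).trace = 1 - (p : ℂ) := by
      rw [sub_mul, one_mul, Matrix.trace_sub, hρtr, hpt]
    have h3 := aux_trace_re_nonneg hQpsd
    rw [h1, h2] at h3
    simp only [Complex.sub_re, Complex.one_re, Complex.ofReal_re] at h3
    linarith
  set sp : ℝ := Real.sqrt p with hspdef
  have hsp_pos : 0 < sp := Real.sqrt_pos.mpr hp_pos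
  have hsp_sq : sp * sp = p := Real.mul_self_sqrt hp_pos.le
  have hsp_le_one : sp ≤ 1 := by
    rw [hspdef, show (1:ℝ) = Real.sqrt 1 by simp]
    exact Real.sqrt_le_sqrt hp_le_one
  -- the square root of ρ and the matrix B
  set A : Matrix (Fin n) (Fin n) ℂ := hρ.sqrt with hAdef
  have hA_psd : A.PosSemidef := hρ.posSemidef_sqrt
  have hAH : Aᴴ = A := hA_psd.1
  have hAA : A * A = ρ := hρ.sqrt_mul_self
  set c : ℂ := ((sp⁻¹ : ℝ) : ℂ) with hcdef
  set B : Matrix (Fin n) (Fin n) ℂ := c • (P * A) with hBdef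
  have hBH : Bᴴ = c • (A * P) := by
    rw [hBdef, conjTranspose_smul, conjTranspose_mul, hAH, hP]
    congr 1
    simp [hcdef]
  have hcc : c * c = ((p⁻¹ : ℝ) : ℂ) := by
    rw [hcdef, ← Complex.ofReal_mul, ← mul_inv, hsp_sq]
  -- B * Bᴴ = σ
  have hBB : B * Bᴴ = σ := by
    rw [hBdef, hBH, smul_mul_assoc, mul_smul_comm, smul_smul, hcc, hσ, hpt]
    congr 1
    · rw [← Complex.ofReal_inv]
    · rw [mul_assoc, ← mul_assoc A A P, hAA, ← mul_assoc]
  -- traces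
  have htrAPA : (A * P * A).trace = (p : ℂ) := by
    rw [Matrix.trace_mul_cycle, hAA, Matrix.trace_mul_comm, hpt]
  have hc_p : c * (p : ℂ) = (sp : ℂ) := by
    rw [hcdef, ← Complex.ofReal_mul]
    congr 1
    rw [← hsp_sq, ← mul_assoc, inv_mul_cancel₀ hsp_pos.ne', one_mul]
  have htrAA : (Aᴴ * A).trace = 1 := by rw [hAH, hAA, hρtr]
  have htrBA : (Bᴴ * A).trace = (sp : ℂ) := by
    rw [hBH, smul_mul_assoc, Matrix.trace_smul, htrAPA, smul_eq_mul, hc_p]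
  have htrAB : (Aᴴ * B).trace = (sp : ℂ) := by
    rw [hAH, hBdef, mul_smul_comm, Matrix.trace_smul, ← mul_assoc, htrAPA,
      smul_eq_mul, hc_p]
  have htrBB : (Bᴴ * B).trace = 1 := by
    rw [hBH, hBdef, smul_mul_assoc, mul_smul_comm, smul_smul, hcc]
    have hm : A * P * (P * A) = A * P * A := by
      rw [mul_assoc, ← mul_assoc P P A, hP2, ← mul_assoc]
    rw [hm, Matrix.trace_smul, htrAPA, smul_eq_mul, ← Complex.ofReal_mul,
      inv_mul_cancel₀ hp_pos.ne', Complex.ofReal_one]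
  -- σ is Hermitian, Δ := ρ - σ is Hermitian
  have hσH : σᴴ = σ := by
    rw [hσ, hpt, conjTranspose_smul, conjTranspose_mul, conjTranspose_mul, hP, hρ.1.eq,
      mul_assoc]
    congr 1
    simp [Complex.star_def, map_inv₀, Complex.conj_ofReal]
  have hΔH : (ρ - σ).IsHermitian := by
    show (ρ - σ)ᴴ = ρ - σ
    rw [conjTranspose_sub, hρ.1.eq, hσH]
  set U : Matrix (Fin n) (Fin n) ℂ := (hΔH.eigenvectorUnitary : Matrix (Fin n) (Fin n) ℂ)
    with hUdef
  have hU1 : star U * U = 1 := by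
    rw [hUdef]
    exact Matrix.mem_unitaryGroup_iff'.mp hΔH.eigenvectorUnitary.2
  have hU2 : U * star U = 1 := by
    rw [hUdef]
    exact Matrix.mem_unitaryGroup_iff.mp hΔH.eigenvectorUnitary.2
  set lam : Fin n → ℝ := hΔH.eigenvalues with hlamdef
  have hspec : ρ - σ = U * diagonal (fun i => ((lam i : ℝ) : ℂ)) * star U := by
    have := hΔH.spectral_theorem
    rw [Unitary.conjStarAlgAut_apply] at this
    exact this
  have hmulUDU : ∀ d e : Fin n → ℂ,
      (U * diagonal d * star U) * (U * diagonal e * star U)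
        = U * diagonal (fun i => d i * e i) * star U := by
    intro d e
    simp only [Matrix.mul_assoc]
    rw [← Matrix.mul_assoc (star U) U, hU1, Matrix.one_mul,
      ← Matrix.mul_assoc (diagonal d) (diagonal e), diagonal_mul_diagonal]
  set S : Matrix (Fin n) (Fin n) ℂ :=
    U * diagonal (fun i => ((|lam i| : ℝ) : ℂ)) * star U with hSdef
  have hS_psd : S.PosSemidef := by
    rw [hSdef, Matrix.star_eq_conjTranspose]
    exact (posSemidef_diagonal_iff.mpr fun i =>
      Complex.zero_le_real.mpr (abs_nonneg _)).mul_mul_conjTranspose_same U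
  have hSsq : S ^ 2 = (ρ - σ)ᴴ * (ρ - σ) := by
    have hdd : (fun i => ((|lam i| : ℝ) : ℂ) * ((|lam i| : ℝ) : ℂ))
        = fun i => ((lam i : ℝ) : ℂ) * ((lam i : ℝ) : ℂ) := by
      funext i
      rw [← Complex.ofReal_mul, ← Complex.ofReal_mul, ← sq, ← sq, sq_abs]
    rw [pow_two, hSdef, hmulUDU, hdd, hΔH.eq, hspec, hmulUDU]
  have hSeq : S = (Matrix.posSemidef_conjTranspose_mul_self (ρ - σ)).sqrt :=
    hS_psd.eq_sqrt_of_sq_eq _ hSsq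
  have htrS : S.trace = ((∑ i, |lam i| : ℝ) : ℂ) := by
    rw [hSdef, Matrix.trace_mul_cycle, hU1, Matrix.one_mul, Matrix.trace_diagonal]
    push_cast
    rfl
  -- the sign matrix W
  set sgn : Fin n → ℝ := fun i => if 0 ≤ lam i then (1 : ℝ) else -1 with hsgndef
  set W : Matrix (Fin n) (Fin n) ℂ :=
    U * diagonal (fun i => ((sgn i : ℝ) : ℂ)) * star U with hWdef
  have hWH : Wᴴ = W := by
    rw [hWdef, conjTranspose_mul, conjTranspose_mul, diagonal_conjTranspose,
      Matrix.star_eq_conjTranspose, conjTranspose_conjTranspose, ← Matrix.mul_assoc]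
    congr 2
    funext i
    simp [Pi.star_def, Complex.star_def, Complex.conj_ofReal]
  have hWW : W * W = 1 := by
    rw [hWdef, hmulUDU]
    have : (fun i => ((sgn i : ℝ) : ℂ) * ((sgn i : ℝ) : ℂ)) = fun _ => (1 : ℂ) := by
      funext i
      rw [← Complex.ofReal_mul, hsgndef]
      by_cases h : 0 ≤ lam i <;> simp [h]
    rw [this, diagonal_one, Matrix.mul_one, hU2]
  have htrWΔ : (W * (ρ - σ)).trace = ((∑ i, |lam i| : ℝ) : ℂ) := by
    rw [hWdef, hspec, hmulUDU, Matrix.trace_mul_cycle, hU1, Matrix.one_mul,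
      Matrix.trace_diagonal]
    rw [Complex.ofReal_sum]
    apply Finset.sum_congr rfl
    intro i _
    rw [← Complex.ofReal_mul]
    congr 1
    rw [hsgndef]
    by_cases h : 0 ≤ lam i
    · simp [h, abs_of_nonneg h]
    · push_neg at h
      simp [not_le.mpr h, abs_of_neg h]
  -- the decomposition identity
  have hABρ : A * Aᴴ = ρ := by rw [hAH, hAA]
  have hsum : (A + B) * (A - B)ᴴ + (A - B) * (A + B)ᴴ = (ρ - σ) + (ρ - σ) := by
    rw [← hABρ, ← hBB, conjTranspose_add, conjTranspose_sub]
    noncomm_ring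
  set z : ℂ := ((A - B)ᴴ * (W * (A + B))).trace with hzdef
  have ht1 : (W * ((A + B) * (A - B)ᴴ)).trace = z := by
    rw [← Matrix.mul_assoc, Matrix.trace_mul_cycle, Matrix.mul_assoc, ← hzdef]
  have ht2 : (W * ((A - B) * (A + B)ᴴ)).trace = star z := by
    have hconj : ((A - B)ᴴ * (W * (A + B)))ᴴ = (A + B)ᴴ * W * (A - B) := by
      rw [conjTranspose_mul, conjTranspose_mul, conjTranspose_conjTranspose, hWH]
    rw [← Matrix.mul_assoc, Matrix.trace_mul_cycle, ← hconj, Matrix.trace_conjTranspose,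
      ← hzdef]
  set T : ℝ := ∑ i, |lam i| with hTdef
  have h2T : (T : ℂ) + (T : ℂ) = z + star z := by
    rw [← htrWΔ, ← ht2, ← ht1, ← Matrix.trace_add, ← Matrix.trace_add,
      ← Matrix.mul_add, ← Matrix.mul_add, hsum]
  have hTz : T = z.re := by
    have h := congrArg Complex.re h2T
    simp only [Complex.add_re, Complex.ofReal_re, Complex.conj_re] at h
    have hsre : (star z).re = z.re := Complex.conj_re z
    rw [hsre] at h
    linarith
  -- Cauchy-Schwarz
  have hWC : (W * (A + B))ᴴ * (W * (A + B)) = (A + B)ᴴ * (A + B) := by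
    rw [conjTranspose_mul, hWH, Matrix.mul_assoc, ← Matrix.mul_assoc W W, hWW,
      Matrix.one_mul]
  have htrDD : ((A - B)ᴴ * (A - B)).trace = ((2 - 2 * sp : ℝ) : ℂ) := by
    rw [conjTranspose_sub, Matrix.sub_mul, Matrix.mul_sub, Matrix.mul_sub,
      Matrix.trace_sub, Matrix.trace_sub, Matrix.trace_sub, htrAA, htrAB, htrBA, htrBB]
    push_cast
    ring
  have htrCC : ((A + B)ᴴ * (A + B)).trace = ((2 + 2 * sp : ℝ) : ℂ) := by
    rw [conjTranspose_add, Matrix.add_mul, Matrix.mul_add, Matrix.mul_add,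
      Matrix.trace_add, Matrix.trace_add, Matrix.trace_add, htrAA, htrAB, htrBA, htrBB]
    push_cast
    ring
  have hCS := aux_cs (A - B) (W * (A + B))
  rw [hWC, htrDD, htrCC, ← hzdef] at hCS
  simp only [Complex.ofReal_re] at hCS
  have hsqrt_prod : Real.sqrt (2 - 2 * sp) * Real.sqrt (2 + 2 * sp)
      = 2 * Real.sqrt (1 - p) := by
    rw [← Real.sqrt_mul (by linarith)]
    rw [show (2 - 2 * sp) * (2 + 2 * sp) = 4 * (1 - p) by nlinarith [hsp_sq]]
    rw [show (4 : ℝ) * (1 - p) = (2 * Real.sqrt (1 - p)) ^ 2 by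
      rw [mul_pow, Real.sq_sqrt (by linarith)]; ring]
    exact Real.sqrt_sq (by positivity)
  rw [hsqrt_prod] at hCS
  -- conclude
  have hSeq' : S = (Matrix.posSemidef_conjTranspose_mul_self (ρ - σ)).sqrt :=
    hS_psd.eq_sqrt_of_sq_eq (Matrix.posSemidef_conjTranspose_mul_self (ρ - σ)) hSsq
  rw [← hSeq', htrS, Complex.ofReal_re]
  have hfin : Real.sqrt (1 - p) ≤ Real.sqrt ε := Real.sqrt_le_sqrt (by linarith)
  linarith
end

section
/- Uhlmann unitary for pure states with equal reduced densities: Let ψ, φ ∈ ℂ^(a·b) be unit vectors indexed by Fin a × Fin b. Suppose their reduced states on the first factor coincide, i.e. ∑_{y ∈ Fin b} ψ(x,y)·conj(ψ(x',y)) = ∑_{y ∈ Fin b} φ(x,y)·conj(φ(x',y)) for all x, x' ∈ Fin a. Then there exists a unitary matrix U ∈ Matrix (Fin b) (Fin b) ℂ such that for all (x,y) ∈ Fin a × Fin b, φ(x,y) = ∑_{y' ∈ Fin b} U_{y,y'}·ψ(x,y'), i.e. (Id_a ⊗ U)·ψ = φ. -/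
open Matrix
open scoped InnerProductSpace

theorem pilp_sum_apply {ι κ : Type*} [Fintype ι] (s : Finset ι)
    (F : ι → EuclideanSpace ℂ κ) (j : κ) : (∑ i ∈ s, F i) j = ∑ i ∈ s, F i j := by
  classical
  induction s using Finset.induction with
  | empty => simp [PiLp.zero_apply]
  | insert i s hx ih => simp [Finset.sum_insert hx, PiLp.add_apply, ih]

theorem uhlmann_aux {a b : ℕ}
    (f g : EuclideanSpace ℂ (Fin a) →ₗ[ℂ] EuclideanSpace ℂ (Fin b))
    (h : ∀ u v, ⟪f u, f v⟫_ℂ = ⟪g u, g v⟫_ℂ) :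
    ∃ W : Matrix (Fin b) (Fin b) ℂ, Wᴴ * W = 1 ∧
      ∀ u : EuclideanSpace ℂ (Fin a), ∀ y : Fin b, g u y = ∑ y', W y y' * f u y' := by
  classical
  have hker : LinearMap.ker f ≤ LinearMap.ker g := by
    intro u hu
    rw [LinearMap.mem_ker] at hu ⊢
    have : ⟪g u, g u⟫_ℂ = 0 := by rw [← h, hu, inner_zero_right]
    exact inner_self_eq_zero.mp this
  let h₀ : (LinearMap.range f) →ₗ[ℂ] EuclideanSpace ℂ (Fin b) :=
    ((LinearMap.ker f).liftQ g hker).comp f.quotKerEquivRange.symm.toLinearMap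
  have h₀spec : ∀ u : EuclideanSpace ℂ (Fin a),
      h₀ ⟨f u, LinearMap.mem_range_self f u⟩ = g u := by
    intro u
    simp only [h₀, LinearMap.comp_apply, LinearEquiv.coe_coe]
    rw [f.quotKerEquivRange_symm_apply_image u (LinearMap.mem_range_self f u)]
    simp [Submodule.liftQ_apply]
  have hnorm : ∀ w : LinearMap.range f, ‖h₀ w‖ = ‖w‖ := by
    rintro ⟨w, u, rfl⟩
    rw [h₀spec u]
    have h1 : ⟪g u, g u⟫_ℂ = ⟪f u, f u⟫_ℂ := (h u u).symm
    rw [inner_self_eq_norm_sq_to_K, inner_self_eq_norm_sq_to_K] at h1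
    have h2 : (‖g u‖:ℝ)^2 = ‖f u‖^2 := by exact_mod_cast h1
    calc ‖g u‖ = Real.sqrt (‖g u‖^2) := (Real.sqrt_sq (norm_nonneg _)).symm
      _ = Real.sqrt (‖f u‖^2) := by rw [h2]
      _ = ‖f u‖ := Real.sqrt_sq (norm_nonneg _)
  let L : (LinearMap.range f) →ₗᵢ[ℂ] EuclideanSpace ℂ (Fin b) := ⟨h₀, hnorm⟩
  let E := L.extend
  have Espec : ∀ u, E (f u) = g u := by
    intro u
    have := L.extend_apply ⟨f u, LinearMap.mem_range_self f u⟩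
    simpa [L, h₀spec u] using this
  set W : Matrix (Fin b) (Fin b) ℂ :=
    Matrix.of (fun y y' => E (EuclideanSpace.single y' 1) y) with hW
  have hEapp : ∀ v : EuclideanSpace ℂ (Fin b), ∀ y, E v y = ∑ y', W y y' * v y' := by
    intro v y
    have hv : v = ∑ y', v y' • EuclideanSpace.single y' (1:ℂ) := by
      ext j
      rw [pilp_sum_apply]
      simp [PiLp.smul_apply, EuclideanSpace.single_apply]
    conv_lhs => rw [hv]
    rw [map_sum]
    rw [pilp_sum_apply]
    simp [PiLp.smul_apply, mul_comm, hW]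
  refine ⟨W, ?_, fun u y => by rw [← Espec u, hEapp]⟩
  ext y y'
  have := E.inner_map_map (EuclideanSpace.single y (1:ℂ)) (EuclideanSpace.single y' 1)
  rw [EuclideanSpace.inner_single_left] at this
  simp only [_root_.map_one, one_mul, EuclideanSpace.single_apply] at this
  rw [Matrix.mul_apply, Matrix.one_apply]
  simp only [Matrix.conjTranspose_apply, Matrix.star_apply]
  rw [← this]
  rw [PiLp.inner_apply]
  simp [RCLike.inner_apply, hW, mul_comm]

/-- Uhlmann unitary for pure states with equal reduced densities: if two unit vectors
`ψ, φ` on `ℂ^a ⊗ ℂ^b` have the same reduced state on the first factor, then there is a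
unitary `U` on the second factor with `(Id_a ⊗ U)·ψ = φ`. -/
theorem uhlmann_unitary_of_eq_reduced {a b : ℕ}
    (ψ φ : EuclideanSpace ℂ (Fin a × Fin b)) (hψ : ‖ψ‖ = 1) (hφ : ‖φ‖ = 1)
    (hred : ∀ x x' : Fin a,
      ∑ y : Fin b, ψ (x, y) * starRingEnd ℂ (ψ (x', y)) =
      ∑ y : Fin b, φ (x, y) * starRingEnd ℂ (φ (x', y))) :
    ∃ U : Matrix (Fin b) (Fin b) ℂ,
      U * Uᴴ = 1 ∧ Uᴴ * U = 1 ∧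
      ∀ x : Fin a, ∀ y : Fin b, φ (x, y) = ∑ y' : Fin b, U y y' * ψ (x, y') := by
  classical
  -- define the conjugate-linear-ish maps
  let F : EuclideanSpace ℂ (Fin a × Fin b) →
      (EuclideanSpace ℂ (Fin a) →ₗ[ℂ] EuclideanSpace ℂ (Fin b)) := fun χ =>
    { toFun := fun u => WithLp.toLp 2 (fun y => ∑ x, u x * starRingEnd ℂ (χ (x, y)))
      map_add' := by
        intro u v; ext y
        simp [PiLp.add_apply, add_mul, Finset.sum_add_distrib]
      map_smul' := by
        intro c u; ext y
        simp [PiLp.smul_apply, Finset.mul_sum, mul_assoc, smul_eq_mul] }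
  have Finner : ∀ (χ : EuclideanSpace ℂ (Fin a × Fin b)) (u v : EuclideanSpace ℂ (Fin a)),
      ⟪F χ u, F χ v⟫_ℂ = ∑ x, ∑ x', starRingEnd ℂ (u x) * v x' *
        ∑ y, χ (x, y) * starRingEnd ℂ (χ (x', y)) := by
    intro χ u v
    rw [PiLp.inner_apply]
    simp only [RCLike.inner_apply', F, LinearMap.coe_mk, AddHom.coe_mk, PiLp.toLp_apply]
    simp only [map_sum, _root_.map_mul, RingHomCompTriple.comp_apply, RingHom.id_apply,
      starRingEnd_self_apply, Finset.sum_mul_sum]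
    rw [Finset.sum_comm]
    refine Finset.sum_congr rfl fun x _ => ?_
    rw [Finset.sum_comm]
    refine Finset.sum_congr rfl fun x' _ => ?_
    rw [Finset.mul_sum]
    refine Finset.sum_congr rfl fun y _ => ?_
    ring
  have hFψφ : ∀ u v, ⟪F ψ u, F ψ v⟫_ℂ = ⟪F φ u, F φ v⟫_ℂ := by
    intro u v
    rw [Finner, Finner]
    refine Finset.sum_congr rfl fun x _ => Finset.sum_congr rfl fun x' _ => ?_
    rw [hred x x']
  obtain ⟨W, hW1, hWapp⟩ := uhlmann_aux (F ψ) (F φ) hFψφ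
  refine ⟨W.map (starRingEnd ℂ), ?_, ?_, ?_⟩
  · have hWW : W * Wᴴ = 1 := mul_eq_one_comm.mp hW1
    have : (W.map (starRingEnd ℂ))ᴴ = Wᴴ.map (starRingEnd ℂ) :=
      (Matrix.conjTranspose_map (starRingEnd ℂ) (fun x => by simp)).symm
    rw [this, ← Matrix.map_mul, hWW]
    exact Matrix.map_one _ (map_zero _) (map_one _)
  · have : (W.map (starRingEnd ℂ))ᴴ = Wᴴ.map (starRingEnd ℂ) :=
      (Matrix.conjTranspose_map (starRingEnd ℂ) (fun x => by simp)).symm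
    rw [this, ← Matrix.map_mul, hW1]
    exact Matrix.map_one _ (map_zero _) (map_one _)
  · intro x y
    have key := hWapp (EuclideanSpace.single x 1) y
    have hg : F φ (EuclideanSpace.single x 1) y = starRingEnd ℂ (φ (x, y)) := by
      simp [F, EuclideanSpace.single_apply]
    have hf : ∀ y', F ψ (EuclideanSpace.single x 1) y' = starRingEnd ℂ (ψ (x, y')) := by
      intro y'; simp [F, EuclideanSpace.single_apply]
    rw [hg] at key
    simp only [hf] at key
    have := congrArg (starRingEnd ℂ) key
    simpa [map_sum, Matrix.map_apply] using this
end
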